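/- Let K be a real n×n matrix, let Q be a real n×m matrix (m ≤ n) with orthonormal columns (QᵀQ = I_m), and let r ≤ m be a positive integer. If T* is a real m×n matrix with rank(T*) ≤ r that minimizes ‖QᵀK − T‖_F over all real m×n matrices T with rank(T) ≤ r, then T* also minimizes ‖K − QT‖_F over all real m×n matrices T with rank(T) ≤ r; that is, for every real m×n matrix T with rank(T) ≤ r one has ‖K − QT*‖_F ≤ ‖K − QT‖_F. -/
import Mathlib


open Matrix

/-- Frobenius norm of a real matrix: ‖A‖_F = sqrt(trace(Aᵀ A)). -/
noncomputable def frobNorm {α β : Type*} [Fintype α] [Fintype β] (A : Matrix α β ℝ) : ℝ :=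
  Real.sqrt (Matrix.trace (Aᵀ * A))

lemma trace_transpose_mul_self_nonneg {α β : Type*} [Fintype α] [Fintype β]
    (A : Matrix α β ℝ) : 0 ≤ Matrix.trace (Aᵀ * A) := by
  classical
  unfold Matrix.trace
  apply Finset.sum_nonneg
  intro i _
  simp only [Matrix.diag, Matrix.mul_apply, Matrix.transpose_apply]
  exact Finset.sum_nonneg fun j _ => mul_self_nonneg _

lemma key_identity {n m : ℕ}
    (K : Matrix (Fin n) (Fin n) ℝ) (Q : Matrix (Fin n) (Fin m) ℝ)
    (hQ : Qᵀ * Q = 1) (T : Matrix (Fin m) (Fin n) ℝ) :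
    Matrix.trace ((K - Q * T)ᵀ * (K - Q * T)) =
      (Matrix.trace (Kᵀ * K) - Matrix.trace ((Qᵀ * K)ᵀ * (Qᵀ * K))) +
        Matrix.trace ((Qᵀ * K - T)ᵀ * (Qᵀ * K - T)) := by
  have h1 : Matrix.trace (Kᵀ * (Q * T)) = Matrix.trace (Tᵀ * (Qᵀ * K)) := by
    rw [← Matrix.trace_transpose (Kᵀ * (Q * T))]
    simp [Matrix.transpose_mul, Matrix.mul_assoc]
  have h2 : (Q * T)ᵀ * (Q * T) = Tᵀ * T := by
    simp [Matrix.transpose_mul, Matrix.mul_assoc, ← Matrix.mul_assoc Qᵀ Q T, hQ]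
  simp only [Matrix.transpose_sub, Matrix.sub_mul, Matrix.mul_sub,
    Matrix.trace_sub, h2, Matrix.transpose_mul, Matrix.transpose_transpose]
  have h3 : Matrix.trace ((Q * T)ᵀ * K) = Matrix.trace (Tᵀ * (Qᵀ * K)) := by
    simp [Matrix.transpose_mul, Matrix.mul_assoc]
  have h4 : Matrix.trace (Kᵀ * Q * (Qᵀ * K)) = Matrix.trace (Kᵀ * Q * Qᵀ * K) := by
    rw [Matrix.mul_assoc (Kᵀ * Q)]
  have h5 : Matrix.trace (Tᵀ * Qᵀ * (Q * T)) = Matrix.trace (Tᵀ * T) := by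
    rw [Matrix.mul_assoc, ← Matrix.mul_assoc Qᵀ, hQ, Matrix.one_mul]
  have h6 : Matrix.trace (Kᵀ * Q * T) = Matrix.trace (Kᵀ * (Q * T)) := by
    rw [Matrix.mul_assoc]
  rw [Matrix.transpose_mul] at h3
  linarith [h1, h3, h4, h5, h6]

theorem stmt_0 {n m r : ℕ} (hmn : m ≤ n) (hr : 0 < r) (hrm : r ≤ m)
    (K : Matrix (Fin n) (Fin n) ℝ) (Q : Matrix (Fin n) (Fin m) ℝ)
    (hQ : Qᵀ * Q = 1)
    (Tstar : Matrix (Fin m) (Fin n) ℝ) (hTstar : Tstar.rank ≤ r)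
    (hmin : ∀ T : Matrix (Fin m) (Fin n) ℝ, T.rank ≤ r →
      frobNorm (Qᵀ * K - Tstar) ≤ frobNorm (Qᵀ * K - T)) :
    ∀ T : Matrix (Fin m) (Fin n) ℝ, T.rank ≤ r →
      frobNorm (K - Q * Tstar) ≤ frobNorm (K - Q * T) := by
  intro T hT
  have hmin' := hmin T hT
  unfold frobNorm at *
  have hle : Matrix.trace ((Qᵀ * K - Tstar)ᵀ * (Qᵀ * K - Tstar)) ≤
      Matrix.trace ((Qᵀ * K - T)ᵀ * (Qᵀ * K - T)) := by
    have h1 := trace_transpose_mul_self_nonneg (Qᵀ * K - Tstar)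
    have h2 := trace_transpose_mul_self_nonneg (Qᵀ * K - T)
    nlinarith [Real.sq_sqrt h1, Real.sq_sqrt h2, Real.sqrt_nonneg
      (Matrix.trace ((Qᵀ * K - Tstar)ᵀ * (Qᵀ * K - Tstar))),
      Real.sqrt_nonneg (Matrix.trace ((Qᵀ * K - T)ᵀ * (Qᵀ * K - T)))]
  apply Real.sqrt_le_sqrt
  rw [key_identity K Q hQ Tstar, key_identity K Q hQ T]
  linarith
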